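/- Let W₁, W₂ be n×n nonnegative matrices each of whose rows sums to at most 1 (row-substochastic), and let Ψ₁, Ψ₂ be p×p matrices with ‖Ψ₁‖_∞ + ‖Ψ₂‖_∞ < 1, where ‖·‖_∞ is the maximum absolute row sum norm. Then the spectral radius of Ψ₁^T ⊗ W₁ + Ψ₂^T ⊗ W₂ is strictly less than 1, so I_{np} - Ψ₁^T ⊗ W₁ - Ψ₂^T ⊗ W₂ is invertible. -/

import Mathlib

open Matrix Kronecker

lemma aux_exists_eigenvector {m : Type*} [Fintype m] [DecidableEq m]
    {M : Matrix m m ℂ} {z : ℂ} (hz : z ∈ spectrum ℂ M) :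
    ∃ x : m → ℂ, x ≠ 0 ∧ M.mulVec x = z • x := by
  rw [← AlgEquiv.spectrum_eq (Matrix.toLinAlgEquiv' : Matrix m m ℂ ≃ₐ[ℂ] _)] at hz
  obtain ⟨x, hx⟩ := (Module.End.hasEigenvalue_iff_mem_spectrum.mpr hz).exists_hasEigenvector
  refine ⟨x, hx.2, ?_⟩
  have := hx.apply_eq_smul
  rw [Matrix.toLinAlgEquiv'_apply] at this; exact this

lemma aux_key_bound (n p : ℕ) (W1 W2 : Matrix (Fin n) (Fin n) ℝ)
    (hW1e : ∀ i j, 0 ≤ W1 i j) (hW2e : ∀ i j, 0 ≤ W2 i j)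
    (hW1r : ∀ i, ∑ j, W1 i j ≤ 1) (hW2r : ∀ i, ∑ j, W2 i j ≤ 1)
    (P1 P2 : Matrix (Fin p) (Fin p) ℝ) (a b : ℝ)
    (hP1 : ∀ i, ∑ j, |P1 i j| ≤ a) (hP2 : ∀ i, ∑ j, |P2 i j| ≤ b)
    {z : ℂ} (hz : z ∈ spectrum ℂ ((P1ᵀ ⊗ₖ W1 + P2ᵀ ⊗ₖ W2).map Complex.ofReal)) :
    ‖z‖ ≤ a + b := by
  obtain ⟨x, hx0, hxe⟩ := aux_exists_eigenvector hz
  obtain ⟨⟨j0, i0⟩, hxi⟩ := Function.ne_iff.mp hx0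
  have ha0 : 0 ≤ a := le_trans (Finset.sum_nonneg fun j _ => abs_nonneg _) (hP1 j0)
  have hb0 : 0 ≤ b := le_trans (Finset.sum_nonneg fun j _ => abs_nonneg _) (hP2 j0)
  set S : Fin n → ℝ := fun i => ∑ j, ‖x (j, i)‖ with hS
  obtain ⟨i, -, hi⟩ := Finset.exists_max_image Finset.univ S ⟨i0, Finset.mem_univ i0⟩
  have hSle : ∀ l, S l ≤ S i := fun l => hi l (Finset.mem_univ l)
  have hSnn : ∀ l, 0 ≤ S l := fun l => Finset.sum_nonneg fun j _ => norm_nonneg _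
  have hSpos : 0 < S i :=
    lt_of_lt_of_le (lt_of_lt_of_le (norm_pos_iff.mpr hxi)
      (Finset.single_le_sum (f := fun j => ‖x (j, i0)‖) (fun j _ => norm_nonneg _)
        (Finset.mem_univ j0))) (hSle i0)
  set M : Matrix (Fin p × Fin n) (Fin p × Fin n) ℂ :=
    (P1ᵀ ⊗ₖ W1 + P2ᵀ ⊗ₖ W2).map Complex.ofReal with hM
  have hterm : ∀ j : Fin p, ‖M.mulVec x (j, i)‖ ≤
      ∑ k, ∑ l, (|P1 k j| * W1 i l + |P2 k j| * W2 i l) * ‖x (k, l)‖ := by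
    intro j
    calc ‖M.mulVec x (j, i)‖ = ‖∑ y : Fin p × Fin n, M (j, i) y * x y‖ := by
          rw [Matrix.mulVec, dotProduct]
      _ ≤ ∑ y : Fin p × Fin n, ‖M (j, i) y * x y‖ := norm_sum_le _ _
      _ = ∑ k, ∑ l, ‖M (j, i) (k, l)‖ * ‖x (k, l)‖ := by
          rw [Fintype.sum_prod_type]; simp [norm_mul]
      _ ≤ ∑ k, ∑ l, (|P1 k j| * W1 i l + |P2 k j| * W2 i l) * ‖x (k, l)‖ := by
          refine Finset.sum_le_sum fun k _ => Finset.sum_le_sum fun l _ => ?_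
          refine mul_le_mul_of_nonneg_right ?_ (norm_nonneg _)
          rw [hM]
          simp only [Matrix.map_apply, Matrix.add_apply, Matrix.kroneckerMap_apply,
            Matrix.transpose_apply, Complex.norm_real, Real.norm_eq_abs]
          calc |P1 k j * W1 i l + P2 k j * W2 i l|
              ≤ |P1 k j * W1 i l| + |P2 k j * W2 i l| := abs_add_le _ _
            _ = |P1 k j| * W1 i l + |P2 k j| * W2 i l := by
                rw [abs_mul, abs_mul, abs_of_nonneg (hW1e i l), abs_of_nonneg (hW2e i l)]
  have key : ‖z‖ * S i ≤ (a + b) * S i := by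
    calc ‖z‖ * S i = ∑ j, ‖M.mulVec x (j, i)‖ := by
          rw [hxe, hS, Finset.mul_sum]
          exact Finset.sum_congr rfl fun j _ => (norm_smul z (x (j, i))).symm
      _ ≤ ∑ j, ∑ k, ∑ l, (|P1 k j| * W1 i l + |P2 k j| * W2 i l) * ‖x (k, l)‖ :=
          Finset.sum_le_sum fun j _ => hterm j
      _ = ∑ k, ∑ l, (∑ j, |P1 k j|) * (W1 i l * ‖x (k, l)‖)
          + ∑ k, ∑ l, (∑ j, |P2 k j|) * (W2 i l * ‖x (k, l)‖) := by
          rw [Finset.sum_comm, ← Finset.sum_add_distrib]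
          refine Finset.sum_congr rfl fun k _ => ?_
          rw [Finset.sum_comm, ← Finset.sum_add_distrib]
          refine Finset.sum_congr rfl fun l _ => ?_
          rw [Finset.sum_mul, Finset.sum_mul, ← Finset.sum_add_distrib]
          exact Finset.sum_congr rfl fun j _ => by ring
      _ ≤ ∑ k, ∑ l, a * (W1 i l * ‖x (k, l)‖) + ∑ k, ∑ l, b * (W2 i l * ‖x (k, l)‖) := by
          refine add_le_add (Finset.sum_le_sum fun k _ => Finset.sum_le_sum fun l _ => ?_)
            (Finset.sum_le_sum fun k _ => Finset.sum_le_sum fun l _ => ?_)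
          · exact mul_le_mul_of_nonneg_right (hP1 k)
              (mul_nonneg (hW1e i l) (norm_nonneg _))
          · exact mul_le_mul_of_nonneg_right (hP2 k)
              (mul_nonneg (hW2e i l) (norm_nonneg _))
      _ = a * ∑ l, W1 i l * S l + b * ∑ l, W2 i l * S l := by
          have swap : ∀ (c : ℝ) (W : Matrix (Fin n) (Fin n) ℝ),
              ∑ k : Fin p, ∑ l, c * (W i l * ‖x (k, l)‖) = c * ∑ l, W i l * S l := by
            intro c W
            rw [Finset.sum_comm, Finset.mul_sum]
            refine Finset.sum_congr rfl fun l _ => ?_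
            simp only [hS, Finset.mul_sum]
          rw [swap, swap]
      _ ≤ a * ∑ l, W1 i l * S i + b * ∑ l, W2 i l * S i := by
          refine add_le_add (mul_le_mul_of_nonneg_left (Finset.sum_le_sum fun l _ =>
              mul_le_mul_of_nonneg_left (hSle l) (hW1e i l)) ha0)
            (mul_le_mul_of_nonneg_left (Finset.sum_le_sum fun l _ =>
              mul_le_mul_of_nonneg_left (hSle l) (hW2e i l)) hb0)
      _ = a * (∑ l, W1 i l) * S i + b * (∑ l, W2 i l) * S i := by
          rw [← Finset.sum_mul, ← Finset.sum_mul]; ring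
      _ ≤ a * 1 * S i + b * 1 * S i := by
          refine add_le_add (mul_le_mul_of_nonneg_right
              (mul_le_mul_of_nonneg_left (hW1r i) ha0) hSpos.le)
            (mul_le_mul_of_nonneg_right (mul_le_mul_of_nonneg_left (hW2r i) hb0) hSpos.le)
      _ = (a + b) * S i := by ring
  exact le_of_mul_le_mul_right key hSpos


/-- If `W₁, W₂` are row-substochastic (entries in `[0,1]`, row sums `≤ 1`) and the maximum
absolute row sums of `Ψ₁` and `Ψ₂` add up to less than `1`, then the spectral radius of
`Ψ₁ᵀ ⊗ W₁ + Ψ₂ᵀ ⊗ W₂` is strictly less than `1` and `I - Ψ₁ᵀ ⊗ W₁ - Ψ₂ᵀ ⊗ W₂` is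
invertible. -/
theorem spectralRadius_lt_one_of_substochastic
    (n p : ℕ) (W1 W2 : Matrix (Fin n) (Fin n) ℝ)
    (hW1e : ∀ i j, 0 ≤ W1 i j ∧ W1 i j ≤ 1) (hW2e : ∀ i j, 0 ≤ W2 i j ∧ W2 i j ≤ 1)
    (hW1r : ∀ i, ∑ j, W1 i j ≤ 1) (hW2r : ∀ i, ∑ j, W2 i j ≤ 1)
    (P1 P2 : Matrix (Fin p) (Fin p) ℝ)
    (a b : ℝ)
    (hP1 : ∀ i, ∑ j, |P1 i j| ≤ a) (hP2 : ∀ i, ∑ j, |P2 i j| ≤ b)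
    (hab : a + b < 1) :
    spectralRadius ℂ ((P1ᵀ ⊗ₖ W1 + P2ᵀ ⊗ₖ W2).map Complex.ofReal) < 1 ∧
    IsUnit ((1 : Matrix (Fin p × Fin n) (Fin p × Fin n) ℝ) - P1ᵀ ⊗ₖ W1 - P2ᵀ ⊗ₖ W2) := by
  have hbound : ∀ z ∈ spectrum ℂ ((P1ᵀ ⊗ₖ W1 + P2ᵀ ⊗ₖ W2).map Complex.ofReal), ‖z‖ ≤ a + b :=
    fun z hz => aux_key_bound n p W1 W2 (fun i j => (hW1e i j).1) (fun i j => (hW2e i j).1)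
      hW1r hW2r P1 P2 a b hP1 hP2 hz
  constructor
  · rw [spectralRadius]
    refine lt_of_le_of_lt (iSup₂_le fun z hz => ?_) (ENNReal.ofReal_lt_one.mpr hab)
    rw [show ((‖z‖₊ : NNReal) : ENNReal) = ENNReal.ofReal ‖z‖ from (ofReal_norm z).symm]
    exact ENNReal.ofReal_le_ofReal (hbound z hz)
  · by_contra h
    have hdet : ((1 : Matrix (Fin p × Fin n) (Fin p × Fin n) ℝ)
        - P1ᵀ ⊗ₖ W1 - P2ᵀ ⊗ₖ W2).det = 0 := by
      by_contra hd
      exact h ((Matrix.isUnit_iff_isUnit_det _).mpr (isUnit_iff_ne_zero.mpr hd))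
    have h1 : (1 : ℂ) ∈ spectrum ℂ ((P1ᵀ ⊗ₖ W1 + P2ᵀ ⊗ₖ W2).map Complex.ofReal) := by
      rw [spectrum.mem_iff]
      intro hu
      rw [Matrix.isUnit_iff_isUnit_det, isUnit_iff_ne_zero] at hu
      apply hu
      have heq : algebraMap ℂ (Matrix (Fin p × Fin n) (Fin p × Fin n) ℂ) 1
          - (P1ᵀ ⊗ₖ W1 + P2ᵀ ⊗ₖ W2).map Complex.ofReal
          = ((1 : Matrix (Fin p × Fin n) (Fin p × Fin n) ℝ)
            - P1ᵀ ⊗ₖ W1 - P2ᵀ ⊗ₖ W2).map Complex.ofReal := by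
        ext ⟨i1, i2⟩ ⟨j1, j2⟩
        simp [Matrix.algebraMap_matrix_apply, Matrix.one_apply, Matrix.sub_apply,
          Matrix.map_apply, Matrix.add_apply, apply_ite (Complex.ofReal)]
        split <;> ring
      rw [heq]
      have : (((1 : Matrix (Fin p × Fin n) (Fin p × Fin n) ℝ)
          - P1ᵀ ⊗ₖ W1 - P2ᵀ ⊗ₖ W2).map Complex.ofReal).det
          = Complex.ofReal (((1 : Matrix (Fin p × Fin n) (Fin p × Fin n) ℝ)
          - P1ᵀ ⊗ₖ W1 - P2ᵀ ⊗ₖ W2).det) := by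
        exact (RingHom.map_det Complex.ofRealHom _).symm
      rw [this, hdet, Complex.ofReal_zero]
    have := hbound 1 h1
    rw [norm_one] at this
    linarith
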